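/- Let f(x,θ) = n x^{n−1}/θⁿ on [0,θ], k ≥ 1, and g(x,θ) = n(n+k)(1 − x^k/θ^k) x^{n−1}/(k θⁿ) on [0,θ]. Then g(·,θ) is a probability density and with T(x) = (n+k)x^k/n, λ(θ) := ∫₀^θ T g dx satisfies (λ′(θ))²/N(θ) = k²θ^{2k}/(n(n+2k)) = Var_{f_θ}(T), where N(θ) = ∫₀^θ (∂_θ g(x,θ))²/f(x,θ) dx. -/

import Mathlib

private lemma integ_two (A B : ℝ) (p q : ℕ) (θ : ℝ) :
    ∫ x in (0:ℝ)..θ, (A * x ^ p + B * x ^ q) =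
      A * (θ ^ (p + 1) / (p + 1)) + B * (θ ^ (q + 1) / (q + 1)) := by
  rw [intervalIntegral.integral_add (f := fun x => A * x ^ p) (g := fun x => B * x ^ q)
      ((continuous_const.mul (continuous_pow p)).intervalIntegrable _ _)
      ((continuous_const.mul (continuous_pow q)).intervalIntegrable _ _),
    intervalIntegral.integral_const_mul, intervalIntegral.integral_const_mul,
    integral_pow, integral_pow]
  ring

private lemma integ_three (A B C : ℝ) (p q r : ℕ) (θ : ℝ) :
    ∫ x in (0:ℝ)..θ, (A * x ^ p + B * x ^ q + C * x ^ r) =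
      A * (θ ^ (p + 1) / (p + 1)) + B * (θ ^ (q + 1) / (q + 1))
        + C * (θ ^ (r + 1) / (r + 1)) := by
  rw [intervalIntegral.integral_add (f := fun x => A * x ^ p + B * x ^ q) (g := fun x => C * x ^ r)
      (((continuous_const.mul (continuous_pow p)).add
        (continuous_const.mul (continuous_pow q))).intervalIntegrable _ _)
      ((continuous_const.mul (continuous_pow r)).intervalIntegrable _ _),
    integ_two, intervalIntegral.integral_const_mul, integral_pow]
  ring

set_option maxHeartbeats 2000000 in
/-- Naudts's generalized Cramér–Rao bound attained for `T(X) = (n+k)X^k/n` estimating `θ^k`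
in the uniform-maximum model, with escort `g(x,θ) = n(n+k)(1 − x^k/θ^k)x^(n-1)/(kθⁿ)`. -/
theorem uniform_max_power_naudts_bound_attained
    (n k : ℕ) (hn : 1 ≤ n) (hk : 1 ≤ k) (θ : ℝ) (hθ : 0 < θ)
    (f g : ℝ → ℝ → ℝ)
    (hf : ∀ x t, f x t = (n : ℝ) * x ^ (n - 1) / t ^ n)
    (hg : ∀ x t, g x t =
      (n : ℝ) * ((n : ℝ) + k) * (1 - x ^ k / t ^ k) * x ^ (n - 1) / ((k : ℝ) * t ^ n)) :
    (∫ x in (0:ℝ)..θ, g x θ) = 1 ∧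
    (deriv (fun t => ∫ x in (0:ℝ)..t, (((n : ℝ) + k) * x ^ k / n) * g x t) θ) ^ 2 /
        (∫ x in (0:ℝ)..θ, (deriv (fun t => g x t) θ) ^ 2 / f x θ) =
      (k : ℝ) ^ 2 * θ ^ (2 * k) / ((n : ℝ) * ((n : ℝ) + 2 * k)) ∧
    (k : ℝ) ^ 2 * θ ^ (2 * k) / ((n : ℝ) * ((n : ℝ) + 2 * k)) =
      ∫ x in (0:ℝ)..θ, (((n : ℝ) + k) * x ^ k / n - θ ^ k) ^ 2 * f x θ := by
  obtain ⟨m, rfl⟩ : ∃ m, n = m + 1 := ⟨n - 1, by omega⟩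
  obtain ⟨j, rfl⟩ : ∃ j, k = j + 1 := ⟨k - 1, by omega⟩
  simp only [Nat.add_sub_cancel] at hf hg
  push_cast at hf hg ⊢
  have hθ' : θ ≠ 0 := ne_of_gt hθ
  have hm : ((m:ℝ)+1) ≠ 0 := by positivity
  have hj : ((j:ℝ)+1) ≠ 0 := by positivity
  -- Part 1: g is a probability density
  have h1 : (∫ x in (0:ℝ)..θ, g x θ) = 1 := by
    have hcong : Set.EqOn (fun x => g x θ)
        (fun x => (((m:ℝ)+1) * (((m:ℝ)+1) + ((j:ℝ)+1)) / (((j:ℝ)+1) * θ ^ (m+1))) * x ^ m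
          + (-(((m:ℝ)+1) * (((m:ℝ)+1) + ((j:ℝ)+1)) / (((j:ℝ)+1) * θ ^ (m+j+2)))) * x ^ (m+j+1))
        (Set.uIcc 0 θ) := by
      intro x _
      simp only [hg]
      field_simp
      ring
    rw [intervalIntegral.integral_congr hcong, integ_two]
    push_cast
    field_simp
    ring
  refine ⟨h1, ?_, ?_⟩
  · -- Part 2: the bound is attained
    -- the expectation λ(t) of T under g(·,t) in closed form
    have hlam : (fun t => ∫ x in (0:ℝ)..t,
          ((((m:ℝ)+1) + ((j:ℝ)+1)) * x ^ (j+1) / ((m:ℝ)+1)) * g x t)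
        = fun t => (((m:ℝ)+1) + ((j:ℝ)+1)) / (((m:ℝ)+1) + 2*((j:ℝ)+1)) * t ^ (j+1) := by
      funext t
      rcases eq_or_ne t 0 with rfl | ht
      · simp
      · have hcong : Set.EqOn
            (fun x => ((((m:ℝ)+1) + ((j:ℝ)+1)) * x ^ (j+1) / ((m:ℝ)+1)) * g x t)
            (fun x => ((((m:ℝ)+1) + ((j:ℝ)+1))^2 / (((j:ℝ)+1) * t ^ (m+1))) * x ^ (m+j+1)
              + (-((((m:ℝ)+1) + ((j:ℝ)+1))^2 / (((j:ℝ)+1) * t ^ (m+j+2)))) * x ^ (m+2*j+2))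
            (Set.uIcc 0 t) := by
          intro x _
          simp only [hg]
          field_simp
          ring
        rw [intervalIntegral.integral_congr hcong, integ_two]
        push_cast
        field_simp
        ring
    -- the derivative of λ at θ
    have hderiv1 : deriv (fun t => ∫ x in (0:ℝ)..t,
          ((((m:ℝ)+1) + ((j:ℝ)+1)) * x ^ (j+1) / ((m:ℝ)+1)) * g x t) θ
        = (((m:ℝ)+1) + ((j:ℝ)+1)) / (((m:ℝ)+1) + 2*((j:ℝ)+1)) * (((j:ℝ)+1) * θ ^ j) := by
      rw [hlam, deriv_const_mul _ (differentiable_pow (j+1)).differentiableAt, deriv_pow_field]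
      simp
    -- the θ-derivative of g in closed form
    have hdg : ∀ x : ℝ, deriv (fun t => g x t) θ =
        (-(((m:ℝ)+1)^2 * (((m:ℝ)+1) + ((j:ℝ)+1)) / (((j:ℝ)+1) * θ ^ (m+2)))) * x ^ m
          + (((m:ℝ)+1) * (((m:ℝ)+1) + ((j:ℝ)+1))^2 / (((j:ℝ)+1) * θ ^ (m+j+3)))
            * x ^ (m+j+1) := by
      intro x
      have hfun : (fun t => g x t) = fun t =>
          (((m:ℝ)+1) * (((m:ℝ)+1) + ((j:ℝ)+1)) * x ^ m / ((j:ℝ)+1)) * t ^ (-((m:ℤ)+1))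
            + (-(((m:ℝ)+1) * (((m:ℝ)+1) + ((j:ℝ)+1)) * x ^ (m+j+1) / ((j:ℝ)+1)))
              * t ^ (-((m:ℤ)+1) - ((j:ℤ)+1)) := by
        funext t
        rcases eq_or_ne t 0 with rfl | ht
        · rw [hg]
          rw [zero_zpow _ (by omega), zero_zpow _ (by omega),
            zero_pow (by omega : m + 1 ≠ 0)]
          simp
        · rw [hg]
          have h1 : t ^ (-((m:ℤ)+1)) = (t ^ (m+1) : ℝ)⁻¹ := by
            rw [← zpow_natCast t (m+1), ← zpow_neg]; push_cast; ring_nf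
          have h2 : t ^ (-((m:ℤ)+1) - ((j:ℤ)+1)) = (t ^ (m+j+2) : ℝ)⁻¹ := by
            rw [← zpow_natCast t (m+j+2), ← zpow_neg]; push_cast; ring_nf
          rw [h1, h2]
          field_simp
          ring
      rw [hfun, deriv_fun_add, deriv_const_mul, deriv_const_mul, deriv_zpow, deriv_zpow]
      · have h3 : θ ^ (-((m:ℤ)+1) - 1) = (θ ^ (m+2) : ℝ)⁻¹ := by
          rw [← zpow_natCast θ (m+2), ← zpow_neg]; push_cast; ring_nf
        have h4 : θ ^ (-((m:ℤ)+1) - ((j:ℤ)+1) - 1) = (θ ^ (m+j+3) : ℝ)⁻¹ := by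
          rw [← zpow_natCast θ (m+j+3), ← zpow_neg]; push_cast; ring_nf
        rw [h3, h4]
        push_cast
        field_simp
        ring
      · exact (differentiableAt_zpow.mpr (Or.inl hθ'))
      · exact (differentiableAt_zpow.mpr (Or.inl hθ'))
      · exact ((differentiableAt_zpow.mpr (Or.inl hθ')).const_mul _)
      · exact ((differentiableAt_zpow.mpr (Or.inl hθ')).const_mul _)
    -- the generalized Fisher information in closed form
    have hN : (∫ x in (0:ℝ)..θ, (deriv (fun t => g x t) θ) ^ 2 / f x θ)
        = ((m:ℝ)+1) * (((m:ℝ)+1) + ((j:ℝ)+1))^2 / (((((m:ℝ)+1) + 2*((j:ℝ)+1))) * θ^2) := by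
      set P : ℝ := -(((m:ℝ)+1)^2 * (((m:ℝ)+1) + ((j:ℝ)+1)) / (((j:ℝ)+1) * θ ^ (m+2))) with hP
      set Q : ℝ := ((m:ℝ)+1) * (((m:ℝ)+1) + ((j:ℝ)+1))^2 / (((j:ℝ)+1) * θ ^ (m+j+3)) with hQ
      have hcong : Set.EqOn (fun x => (deriv (fun t => g x t) θ) ^ 2 / f x θ)
          (fun x => (θ^(m+1) * P^2 / ((m:ℝ)+1)) * x ^ m
            + (2 * θ^(m+1) * P * Q / ((m:ℝ)+1)) * x ^ (m+j+1)
            + (θ^(m+1) * Q^2 / ((m:ℝ)+1)) * x ^ (m+2*j+2)) (Set.uIcc 0 θ) := by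
        intro x _
        simp only [hdg x, hf]
        rcases eq_or_ne x 0 with rfl | hx
        · rw [zero_pow (by omega : m+j+1 ≠ 0), zero_pow (by omega : m+2*j+2 ≠ 0)]
          rcases Nat.eq_zero_or_pos m with rfl | hmpos
          · rw [pow_zero]
            push_cast
            field_simp
            ring
          · rw [zero_pow (by omega : m ≠ 0)]
            norm_num
        · field_simp
          ring
      rw [intervalIntegral.integral_congr hcong, integ_three, hP, hQ]
      push_cast
      field_simp
      ring
    rw [hderiv1, hN]
    field_simp
    ring
  · -- Part 3: the variance of T under f(·,θ)
    have hcong : Set.EqOn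
        (fun x => ((((m:ℝ)+1) + ((j:ℝ)+1)) * x ^ (j+1) / ((m:ℝ)+1) - θ ^ (j+1)) ^ 2 * f x θ)
        (fun x => (((m:ℝ)+1) * θ ^ (2*j+2) / θ ^ (m+1)) * x ^ m
          + (-(2 * (((m:ℝ)+1) + ((j:ℝ)+1)) * θ ^ (j+1) / θ ^ (m+1))) * x ^ (m+j+1)
          + ((((m:ℝ)+1) + ((j:ℝ)+1)) ^ 2 / ((((m:ℝ)+1)) * θ ^ (m+1))) * x ^ (m+2*j+2))
        (Set.uIcc 0 θ) := by
      intro x _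
      simp only [hf]
      field_simp
      ring
    rw [intervalIntegral.integral_congr hcong, integ_three]
    push_cast
    field_simp
    ring
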